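/- If ω is an exterior k-form on ℝⁿ all of whose r-th order directional derivatives exist with |ω|_{C^r} < ∞, then |ω(Δ_{σ^r}(p;α))| ≤ ‖σ‖·‖α‖·|ω|_{C^r} for every r-difference k-chain Δ_{σ^r}(p;α) with α simple. -/

import Mathlib

noncomputable section

open Filter

variable {E : Type*} [NormedAddCommGroup E] [NormedSpace ℝ E]

/-- The product of the norms of the vectors in the list `σ`. -/
def lnorm (σ : List E) : ℝ := (σ.map norm).prod

/-- Iterated directional derivative of a function along a list of directions. -/
def dirDerivs : List E → (E → ℝ) → E → ℝ
  | [], f => f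
  | u :: σ, f => fun p => fderiv ℝ (dirDerivs σ f) p u

/-- Iterated translation-difference of a function along a list of vectors. -/
def fdiff : List E → (E → ℝ) → E → ℝ
  | [], f => f
  | u :: σ, f => fun p => fdiff σ f (p + u) - fdiff σ f p

set_option linter.unusedSectionVars false
set_option linter.unusedVariables false

lemma lnorm_append_singleton (τ : List E) (u : E) :
    lnorm (τ ++ [u]) = lnorm τ * ‖u‖ := by
  simp [lnorm]

lemma dirDerivs_deriv (u : E) : ∀ (τ : List E) (f : E → ℝ),
    dirDerivs τ (fun q => fderiv ℝ f q u) = dirDerivs (τ ++ [u]) f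
  | [], f => rfl
  | v :: τ, f => by
    show (fun p => fderiv ℝ (dirDerivs τ fun q => fderiv ℝ f q u) p v) = _
    rw [dirDerivs_deriv u τ f]
    rfl

lemma differentiable_translate {f : E → ℝ} (hf : Differentiable ℝ f) (v : E) :
    Differentiable ℝ (fun p => f (p + v)) :=
  hf.comp (differentiable_id.add_const v)

lemma fderiv_translate {f : E → ℝ} (hf : Differentiable ℝ f) (v p : E) (u : E) :
    fderiv ℝ (fun q => f (q + v)) p u = fderiv ℝ f (p + v) u := by
  have h : HasFDerivAt (fun q : E => f (q + v))
      ((fderiv ℝ f (p + v)).comp (ContinuousLinearMap.id ℝ E)) p :=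
    (hf (p + v)).hasFDerivAt.comp p ((hasFDerivAt_id p).add_const v)
  simp [h.fderiv]

lemma fdiff_differentiable : ∀ (σ : List E) {f : E → ℝ},
    Differentiable ℝ f → Differentiable ℝ (fdiff σ f)
  | [], f, hf => hf
  | v :: σ, f, hf =>
    (differentiable_translate (fdiff_differentiable σ hf) v).sub
      (fdiff_differentiable σ hf)

lemma fderiv_fdiff (u : E) : ∀ (σ : List E) (f : E → ℝ), Differentiable ℝ f →
    ∀ p, fderiv ℝ (fdiff σ f) p u = fdiff σ (fun q => fderiv ℝ f q u) p
  | [], f, _, p => rfl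
  | v :: σ, f, hf, p => by
    have hd := fdiff_differentiable σ hf
    show fderiv ℝ (fun q => fdiff σ f (q + v) - fdiff σ f q) p u = _
    rw [fderiv_fun_sub ((differentiable_translate hd v) p) (hd p)]
    simp only [ContinuousLinearMap.sub_apply]
    rw [fderiv_translate hd v p u, fderiv_fdiff u σ f hf (p + v),
      fderiv_fdiff u σ f hf p]
    rfl

theorem aux : ∀ (σ : List E) (f : E → ℝ) (C : ℝ),
    (∀ τ : List E, τ.length < σ.length → Differentiable ℝ (dirDerivs τ f)) →
    (∀ (τ : List E) (p : E), τ.length = σ.length → |dirDerivs τ f p| ≤ C * lnorm τ) →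
    ∀ p, |fdiff σ f p| ≤ C * lnorm σ := by
  intro σ
  induction σ with
  | nil =>
    intro f C _ hM p
    simpa [fdiff, lnorm, dirDerivs] using hM [] p rfl
  | cons u σ IH =>
    intro f C hdiff hM p
    have hf : Differentiable ℝ f := by
      simpa [dirDerivs] using hdiff [] (by simp)
    set f' : E → ℝ := fun q => fderiv ℝ f q u with hf'
    have hIH : ∀ q, |fdiff σ f' q| ≤ C * ‖u‖ * lnorm σ := by
      apply IH f' (C * ‖u‖)
      · intro τ hτ
        rw [hf', dirDerivs_deriv u τ f]
        exact hdiff (τ ++ [u]) (by simp; omega)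
      · intro τ q hτ
        rw [hf', dirDerivs_deriv u τ f]
        calc |dirDerivs (τ ++ [u]) f q| ≤ C * lnorm (τ ++ [u]) :=
              hM (τ ++ [u]) q (by simp [hτ])
          _ = C * ‖u‖ * lnorm τ := by rw [lnorm_append_singleton]; ring
    have hg : Differentiable ℝ (fdiff σ f) := fdiff_differentiable σ hf
    -- MVT along the segment from p to p + u
    have key : |fdiff σ f (p + u) - fdiff σ f p| ≤ C * ‖u‖ * lnorm σ := by
      have hder : ∀ t : ℝ, HasDerivAt (fun t : ℝ => fdiff σ f (p + t • u))
          (fderiv ℝ (fdiff σ f) (p + t • u) u) t := by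
        intro t
        have hc : HasDerivAt (fun t : ℝ => p + t • u) u t := by
          simpa using ((hasDerivAt_id t).smul_const u).const_add p
        exact ((hg (p + t • u)).hasFDerivAt.comp_hasDerivAt t hc)
      have := norm_image_sub_le_of_norm_deriv_le_segment_01'
        (f := fun t : ℝ => fdiff σ f (p + t • u))
        (f' := fun t : ℝ => fderiv ℝ (fdiff σ f) (p + t • u) u)
        (C := C * ‖u‖ * lnorm σ)
        (fun t _ => (hder t).hasDerivWithinAt)
        (fun t _ => by
          show ‖fderiv ℝ (fdiff σ f) (p + t • u) u‖ ≤ _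
          rw [fderiv_fdiff u σ f hf (p + t • u)]
          simpa using hIH (p + t • u))
      simpa using this
    calc |fdiff (u :: σ) f p| = |fdiff σ f (p + u) - fdiff σ f p| := rfl
      _ ≤ C * ‖u‖ * lnorm σ := key
      _ = C * lnorm (u :: σ) := by simp [lnorm]; ring

/-- If `ω` is an exterior `k`-form on `ℝⁿ` all of whose `r`-th order
directional derivatives exist and are bounded (i.e. `|ω|_{C^r} ≤ M < ∞`), then
`|ω(Δ_{σ^r}(p;α))| ≤ ‖σ‖·‖α‖·|ω|_{C^r}` for every `r`-difference `k`-chain with `α`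
a simple `k`-vector. -/
theorem abs_fdiff_le_of_Cr_bound {n k : ℕ} (r : ℕ)
    [NormedAddCommGroup (⋀[ℝ]^k (EuclideanSpace ℝ (Fin n)))]
    [NormedSpace ℝ (⋀[ℝ]^k (EuclideanSpace ℝ (Fin n)))]
    (ω : EuclideanSpace ℝ (Fin n) → (⋀[ℝ]^k (EuclideanSpace ℝ (Fin n))) →ₗ[ℝ] ℝ)
    (hdiff : ∀ (α : ⋀[ℝ]^k (EuclideanSpace ℝ (Fin n)))
      (σ : List (EuclideanSpace ℝ (Fin n))), σ.length < r →
      Differentiable ℝ (dirDerivs σ (fun q => ω q α)))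
    (M : ℝ)
    (hM : ∀ (σ : List (EuclideanSpace ℝ (Fin n))) (p : EuclideanSpace ℝ (Fin n))
      (α : ⋀[ℝ]^k (EuclideanSpace ℝ (Fin n))), σ.length = r →
      |dirDerivs σ (fun q => ω q α) p| ≤ M * lnorm σ * ‖α‖)
    (σ : List (EuclideanSpace ℝ (Fin n))) (hσ : σ.length = r)
    (p : EuclideanSpace ℝ (Fin n))
    (v : Fin k → EuclideanSpace ℝ (Fin n))
    (α : ⋀[ℝ]^k (EuclideanSpace ℝ (Fin n)))
    (hα : (α : ExteriorAlgebra ℝ (EuclideanSpace ℝ (Fin n))) = ExteriorAlgebra.ιMulti ℝ k v) :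
    |fdiff σ (fun q => ω q α) p| ≤ lnorm σ * ‖α‖ * M := by
  have h := aux σ (fun q => ω q α) (M * ‖α‖)
    (fun τ hτ => hdiff α τ (by omega))
    (fun τ q hτ => by
      calc |dirDerivs τ (fun q => ω q α) q| ≤ M * lnorm τ * ‖α‖ := hM τ q α (by omega)
        _ = M * ‖α‖ * lnorm τ := by ring) p
  calc |fdiff σ (fun q => ω q α) p| ≤ M * ‖α‖ * lnorm σ := h
    _ = lnorm σ * ‖α‖ * M := by ring
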